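/- If (g,≺) is a gflow for a labelled open graph (G,I,O,λ) and u ∈ V∖O with λ(u) ≠ XY, then (g',≺) is a gflow for (G∖{u}, I, O, λ restricted), where g'(v) = g(v) if u ∉ g(v) and g'(v) = g(v) Δ g(u) if u ∈ g(v). -/
import Mathlib

open Set

/-- The three measurement planes. -/
inductive MPlane | XY | XZ | YZ
deriving DecidableEq

/-- The odd neighbourhood of a set `K`: vertices with an odd number of neighbours in `K`. -/
def oddNbhd {V : Type*} (G : SimpleGraph V) (K : Set V) : Set V :=
  {u | Odd (K ∩ G.neighborSet u).ncard}

/-- `(g, prec)` is a gflow for the labelled open graph `(G, I, O, lam)`. -/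
structure GFlow {V : Type*} (G : SimpleGraph V) (I O : Set V) (lam : V → MPlane)
    (g : V → Set V) (prec : V → V → Prop) : Prop where
  irrefl : ∀ v, ¬ prec v v
  trans : ∀ u v w, prec u v → prec v w → prec u w
  noInput : ∀ v, v ∉ O → g v ∩ I = ∅
  g1 : ∀ v, v ∉ O → ∀ w ∈ g v, w ≠ v → prec v w
  g2 : ∀ v, v ∉ O → ∀ w ∈ oddNbhd G (g v), w ≠ v → prec v w
  gXY : ∀ v, v ∉ O → lam v = MPlane.XY → v ∉ g v ∧ v ∈ oddNbhd G (g v)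
  gXZ : ∀ v, v ∉ O → lam v = MPlane.XZ → v ∈ g v ∧ v ∈ oddNbhd G (g v)
  gYZ : ∀ v, v ∉ O → lam v = MPlane.YZ → v ∈ g v ∧ v ∉ oddNbhd G (g v)

lemma ncard_symmDiff_parity {V : Type*} [Fintype V] (X Y : Set V) :
    Odd (symmDiff X Y).ncard ↔ (Odd X.ncard ↔ ¬ Odd Y.ncard) := by
  have hd : Disjoint (X \ Y) (Y \ X) := disjoint_sdiff_sdiff
  have h1 : (symmDiff X Y).ncard = (X \ Y).ncard + (Y \ X).ncard := by
    rw [Set.symmDiff_def]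
    exact Set.ncard_union_eq hd (toFinite _) (toFinite _)
  have hdx : Disjoint (X \ Y) (X ∩ Y) := by
    rw [Set.disjoint_iff_inter_eq_empty]; ext x; simp; tauto
  have hdy : Disjoint (Y \ X) (Y ∩ X) := by
    rw [Set.disjoint_iff_inter_eq_empty]; ext x; simp; tauto
  have h2 : (X \ Y).ncard + (X ∩ Y).ncard = X.ncard := by
    rw [← Set.ncard_union_eq hdx (toFinite _) (toFinite _), Set.diff_union_inter]
  have h3 : (Y \ X).ncard + (Y ∩ X).ncard = Y.ncard := by
    rw [← Set.ncard_union_eq hdy (toFinite _) (toFinite _), Set.diff_union_inter]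
  have h4 : (X ∩ Y).ncard = (Y ∩ X).ncard := by rw [Set.inter_comm]
  rw [h1, ← h2, ← h3]
  simp only [Nat.odd_iff]
  omega

lemma mem_oddNbhd_symmDiff {V : Type*} [Fintype V] (G : SimpleGraph V) (A B : Set V) (w : V) :
    w ∈ oddNbhd G (symmDiff A B) ↔ (w ∈ oddNbhd G A ↔ w ∉ oddNbhd G B) := by
  have hset : symmDiff A B ∩ G.neighborSet w
      = symmDiff (A ∩ G.neighborSet w) (B ∩ G.neighborSet w) := by
    ext x; simp only [Set.mem_inter_iff, Set.mem_symmDiff]; tauto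
  simp only [oddNbhd, Set.mem_setOf_eq, hset]
  exact ncard_symmDiff_parity _ _

lemma induce_adj' {V : Type*} (G : SimpleGraph V) (s : Set V) (a b : s) :
    (G.induce s).Adj a b ↔ G.Adj a.val b.val := by
  simp [SimpleGraph.induce, SimpleGraph.comap_adj]

lemma mem_oddNbhd_induce {V : Type*} [Fintype V] (G : SimpleGraph V) (u : V) (K : Set V)
    (hu : u ∉ K) (w : {x : V // x ≠ u}) :
    w ∈ oddNbhd (G.induce {x : V | x ≠ u}) (Subtype.val ⁻¹' K) ↔ w.val ∈ oddNbhd G K := by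
  have himg : Subtype.val '' ((Subtype.val ⁻¹' K) ∩
      (G.induce {x : V | x ≠ u}).neighborSet w) = K ∩ G.neighborSet w.val := by
    ext x
    simp only [Set.mem_image, Set.mem_inter_iff, Set.mem_preimage,
      SimpleGraph.mem_neighborSet, induce_adj']
    constructor
    · rintro ⟨b, ⟨hb, hadj⟩, rfl⟩
      exact ⟨hb, hadj⟩
    · rintro ⟨hxK, hadj⟩
      exact ⟨⟨x, fun he => hu (he ▸ hxK)⟩, ⟨hxK, hadj⟩, rfl⟩
  simp only [oddNbhd, Set.mem_setOf_eq]
  rw [← himg, Set.ncard_image_of_injective _ Subtype.val_injective]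
  exact Iff.rfl

/-- Deleting a vertex measured in a plane other than XY preserves gflow,
with the explicitly given updated correction function. -/
theorem gflow_deleteVertex {V : Type*} [Fintype V] (G : SimpleGraph V) (I O : Set V)
    (lam : V → MPlane) (g : V → Set V) (prec : V → V → Prop) (u : V)
    (h : GFlow G I O lam g prec) (huO : u ∉ O) (hlam : lam u ≠ MPlane.XY) :
    GFlow (G.induce {x : V | x ≠ u})
      (Subtype.val ⁻¹' I) (Subtype.val ⁻¹' O)
      (fun v => lam v.val)
      (fun v => {w | (u ∈ g v.val ∧ w.val ∈ symmDiff (g v.val) (g u)) ∨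
                     (u ∉ g v.val ∧ w.val ∈ g v.val)})
      (fun a b => prec a.val b.val) := by
  classical
  have huu : u ∈ g u := by
    cases hg : lam u with
    | XY => exact absurd hg hlam
    | XZ => exact (h.gXZ u huO hg).1
    | YZ => exact (h.gYZ u huO hg).1
  set S : {x : V | x ≠ u} → Set {x : V | x ≠ u} :=
    fun v => {w | (u ∈ g v.val ∧ w.val ∈ symmDiff (g v.val) (g u)) ∨
                  (u ∉ g v.val ∧ w.val ∈ g v.val)} with hS
  have hvne : ∀ v : {x : V | x ≠ u}, v.val ≠ u := fun v => v.prop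
  have hprecvu : ∀ v : {x : V | x ≠ u}, v.val ∉ O → u ∈ g v.val → prec v.val u :=
    fun v hvO hm => h.g1 v.val hvO u hm (fun he => hvne v he.symm)
  have hnotgu : ∀ v : {x : V | x ≠ u}, v.val ∉ O → u ∈ g v.val → v.val ∉ g u :=
    fun v hvO hm hcon => h.irrefl v.val
      (h.trans _ _ _ (hprecvu v hvO hm) (h.g1 u huO v.val hcon (hvne v)))
  have hnotou : ∀ v : {x : V | x ≠ u}, v.val ∉ O → u ∈ g v.val →
      v.val ∉ oddNbhd G (g u) :=
    fun v hvO hm hcon => h.irrefl v.val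
      (h.trans _ _ _ (hprecvu v hvO hm) (h.g2 u huO v.val hcon (hvne v)))
  have huD : ∀ v : {x : V | x ≠ u}, u ∈ g v.val → u ∉ symmDiff (g v.val) (g u) := by
    intro v hm
    rw [Set.mem_symmDiff]
    push_neg
    exact ⟨fun _ => huu, fun _ => hm⟩
  have hSeq1 : ∀ v : {x : V | x ≠ u}, u ∈ g v.val →
      S v = Subtype.val ⁻¹' (symmDiff (g v.val) (g u)) := by
    intro v hm; ext w
    simp only [hS, Set.mem_setOf_eq, Set.mem_preimage]
    constructor
    · rintro (⟨_, hw⟩ | ⟨hc, _⟩)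
      · exact hw
      · exact absurd hm hc
    · exact fun hw => Or.inl ⟨hm, hw⟩
  have hSeq2 : ∀ v : {x : V | x ≠ u}, u ∉ g v.val →
      S v = Subtype.val ⁻¹' (g v.val) := by
    intro v hm; ext w
    simp only [hS, Set.mem_setOf_eq, Set.mem_preimage]
    constructor
    · rintro (⟨hc, _⟩ | ⟨_, hw⟩)
      · exact absurd hc hm
      · exact hw
    · exact fun hw => Or.inr ⟨hm, hw⟩
  have hmemg : ∀ v : {x : V | x ≠ u}, v.val ∉ O → (v ∈ S v ↔ v.val ∈ g v.val) := by
    intro v hvO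
    by_cases hm : u ∈ g v.val
    · rw [hSeq1 v hm]
      have hn := hnotgu v hvO hm
      simp only [Set.mem_preimage, Set.mem_symmDiff]; tauto
    · rw [hSeq2 v hm]; exact Iff.rfl
  have hmemo : ∀ v : {x : V | x ≠ u}, v.val ∉ O →
      (v ∈ oddNbhd (G.induce {x : V | x ≠ u}) (S v) ↔ v.val ∈ oddNbhd G (g v.val)) := by
    intro v hvO
    by_cases hm : u ∈ g v.val
    · rw [hSeq1 v hm]
      refine (mem_oddNbhd_induce G u _ (huD v hm) ⟨v.val, hvne v⟩).trans ?_
      rw [mem_oddNbhd_symmDiff]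
      have hn := hnotou v hvO hm
      tauto
    · rw [hSeq2 v hm]
      exact mem_oddNbhd_induce G u _ hm ⟨v.val, hvne v⟩
  refine ⟨fun v => h.irrefl v.val, fun a b c hab hbc => h.trans _ _ _ hab hbc,
    ?_, ?_, ?_, ?_, ?_, ?_⟩
  · -- noInput
    intro v hvO
    rw [Set.eq_empty_iff_forall_notMem]
    rintro w ⟨hw1, hw2⟩
    have hwI : w.val ∈ I := hw2
    rcases hw1 with ⟨hm, hs⟩ | ⟨hm, hs⟩
    · rcases Set.mem_symmDiff.mp hs with ⟨h1, _⟩ | ⟨h1, _⟩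
      · exact absurd (Set.mem_inter h1 hwI)
          (by rw [h.noInput v.val hvO]; exact notMem_empty _)
      · exact absurd (Set.mem_inter h1 hwI)
          (by rw [h.noInput u huO]; exact notMem_empty _)
    · exact absurd (Set.mem_inter hs hwI)
        (by rw [h.noInput v.val hvO]; exact notMem_empty _)
  · -- g1
    intro v hvO w hw hne
    have hne' : w.val ≠ v.val := fun he => hne (Subtype.ext he)
    rcases hw with ⟨hm, hs⟩ | ⟨hm, hs⟩
    · rcases Set.mem_symmDiff.mp hs with ⟨h1, _⟩ | ⟨h1, _⟩
      · exact h.g1 v.val hvO w.val h1 hne'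
      · exact h.trans _ _ _ (hprecvu v hvO hm) (h.g1 u huO w.val h1 (hvne w))
    · exact h.g1 v.val hvO w.val hs hne'
  · -- g2
    intro v hvO w hw hne
    have hne' : w.val ≠ v.val := fun he => hne (Subtype.ext he)
    have hw0 : w ∈ oddNbhd (G.induce {x : V | x ≠ u}) (S v) := hw
    by_cases hm : u ∈ g v.val
    · rw [hSeq1 v hm] at hw0
      have hw1 := (mem_oddNbhd_induce G u _ (huD v hm) ⟨w.val, hvne w⟩).mp hw0
      rw [mem_oddNbhd_symmDiff] at hw1
      by_cases hov : w.val ∈ oddNbhd G (g v.val)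
      · exact h.g2 v.val hvO w.val hov hne'
      · have hou : w.val ∈ oddNbhd G (g u) := by tauto
        exact h.trans _ _ _ (hprecvu v hvO hm) (h.g2 u huO w.val hou (hvne w))
    · rw [hSeq2 v hm] at hw0
      have hw1 := (mem_oddNbhd_induce G u _ hm ⟨w.val, hvne w⟩).mp hw0
      exact h.g2 v.val hvO w.val hw1 hne'
  · -- gXY
    intro v hvO hl
    obtain ⟨h1, h2⟩ := h.gXY v.val hvO hl
    exact ⟨fun hc => h1 ((hmemg v hvO).mp hc), (hmemo v hvO).mpr h2⟩
  · -- gXZ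
    intro v hvO hl
    obtain ⟨h1, h2⟩ := h.gXZ v.val hvO hl
    exact ⟨(hmemg v hvO).mpr h1, (hmemo v hvO).mpr h2⟩
  · -- gYZ
    intro v hvO hl
    obtain ⟨h1, h2⟩ := h.gYZ v.val hvO hl
    exact ⟨(hmemg v hvO).mpr h1, fun hc => h2 ((hmemo v hvO).mp hc)⟩
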